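/- Let L = L₁ × ℝⁿ with L₁ a locally compact abelian group containing a compact open subgroup, and φ = (α β; γ δ) a continuous endomorphism of L with δ a linear automorphism of ℝⁿ. Then the quasi-determinant det(φ) := α − β∘δ⁻¹∘γ is a topological automorphism of L₁ if and only if α is a topological automorphism of L₁. -/

import Mathlib

/-- `f : M → M` is a topological automorphism: a group automorphism that is a
homeomorphism. -/
def IsTopAut {M : Type*} [AddCommGroup M] [TopologicalSpace M] (f : M → M) : Prop :=
  ∃ e : M ≃+ M, ⇑e = f ∧ Continuous ⇑e ∧ Continuous ⇑e.symm

/-- If `N` is a continuous endomorphism with `N ∘ ψ ∘ N = 0` for every continuous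
endomorphism `ψ`, then `α - N` is a topological automorphism whenever `α` is. -/
lemma aux_pert {L₁ : Type*} [AddCommGroup L₁] [TopologicalSpace L₁] [IsTopologicalAddGroup L₁]
    (α N : L₁ →+ L₁) (hN : Continuous ⇑N)
    (hkey : ∀ (ψ : L₁ →+ L₁), Continuous ⇑ψ → ∀ x, N (ψ (N x)) = 0)
    (h : IsTopAut ⇑α) : IsTopAut (fun x : L₁ => α x - N x) := by
  obtain ⟨e, he, hc, hcs⟩ := h
  have hs0 : ∀ x, N (e.symm (N x)) = 0 := hkey e.symm.toAddMonoidHom hcs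
  have hes : ∀ x, e.symm (α x) = x := by
    intro x; rw [← he]; exact e.symm_apply_apply x
  have hese : ∀ y, α (e.symm y) = y := by
    intro y; rw [← he]; exact e.apply_symm_apply y
  refine ⟨{ toFun := fun x => α x - N x
            invFun := fun y => e.symm (y + N (e.symm y))
            left_inv := ?_
            right_inv := ?_
            map_add' := ?_ }, rfl, ?_, ?_⟩
  · intro x
    show e.symm (α x - N x + N (e.symm (α x - N x))) = x
    have h1 : e.symm (α x - N x) = x - e.symm (N x) := by rw [map_sub, hes]
    rw [h1, map_sub N, hs0, sub_zero, sub_add_cancel, hes]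
  · intro y
    show α (e.symm (y + N (e.symm y))) - N (e.symm (y + N (e.symm y))) = y
    rw [hese, map_add e.symm, map_add N, hs0, add_zero, add_sub_cancel_right]
  · intro x y; simp only [map_add]; abel
  · rw [he] at hc; exact hc.sub hN
  · exact hcs.comp (continuous_id.add (hN.comp hcs))

/-- Key fact: any composite `γ ∘ ψ ∘ β` vanishes, since the image of `β` is connected,
hence lands in the compact open subgroup `U`, and `ℝⁿ` has no nontrivial bounded subgroups. -/
lemma key_zero {L₁ : Type*} [AddCommGroup L₁] [TopologicalSpace L₁] [IsTopologicalAddGroup L₁]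
    [T2Space L₁]
    (U : AddSubgroup L₁) (hUc : IsCompact (U : Set L₁)) (hUo : IsOpen (U : Set L₁))
    {n : ℕ}
    (β : (Fin n → ℝ) →+ L₁) (hβ : Continuous ⇑β)
    (γ : L₁ →+ (Fin n → ℝ)) (hγ : Continuous ⇑γ)
    (ψ : L₁ →+ L₁) (hψ : Continuous ⇑ψ) :
    ∀ v, γ (ψ (β v)) = 0 := by
  intro v
  have hclopen : IsClopen (U : Set L₁) := ⟨hUc.isClosed, hUo⟩
  have hrange : Set.range ⇑β ⊆ (U : Set L₁) := by
    have hconn : IsPreconnected (Set.range ⇑β) := isPreconnected_range hβ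
    have h0 : (0 : L₁) ∈ Set.range ⇑β := ⟨0, map_zero β⟩
    exact (hconn.subset_connectedComponent h0).trans
      (hclopen.connectedComponent_subset U.zero_mem)
  have hK : IsCompact (⇑γ '' (⇑ψ '' (U : Set L₁))) := (hUc.image hψ).image hγ
  obtain ⟨C, hC⟩ := hK.isBounded.exists_norm_le
  by_contra hne
  have hnorm : (0 : ℝ) < ‖γ (ψ (β v))‖ := norm_pos_iff.mpr hne
  obtain ⟨k, hk⟩ := exists_nat_gt (C / ‖γ (ψ (β v))‖)
  have hmem : (k : ℕ) • γ (ψ (β v)) ∈ ⇑γ '' (⇑ψ '' (U : Set L₁)) := by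
    refine ⟨ψ (β ((k : ℕ) • v)), ⟨β ((k : ℕ) • v), hrange ⟨_, rfl⟩, rfl⟩, ?_⟩
    rw [map_nsmul β, map_nsmul ψ, map_nsmul γ]
  have hle := hC _ hmem
  rw [← Nat.cast_smul_eq_nsmul ℝ, norm_smul, Real.norm_natCast] at hle
  have : (k : ℝ) ≤ C / ‖γ (ψ (β v))‖ := by
    rw [le_div_iff₀ hnorm]; simpa using hle
  linarith

theorem stmt_15 {L₁ : Type*} [AddCommGroup L₁] [TopologicalSpace L₁] [IsTopologicalAddGroup L₁]
    [T2Space L₁] [LocallyCompactSpace L₁]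
    (U : AddSubgroup L₁) (hUc : IsCompact (U : Set L₁)) (hUo : IsOpen (U : Set L₁))
    (n : ℕ)
    (α : L₁ →+ L₁) (hα : Continuous ⇑α)
    (β : (Fin n → ℝ) →+ L₁) (hβ : Continuous ⇑β)
    (γ : L₁ →+ (Fin n → ℝ)) (hγ : Continuous ⇑γ)
    (d : (Fin n → ℝ) ≃+ (Fin n → ℝ)) (hd : Continuous ⇑d) :
    IsTopAut (fun x : L₁ => α x - β (d.symm (γ x))) ↔ IsTopAut ⇑α := by
  set N : L₁ →+ L₁ := β.comp (d.symm.toAddMonoidHom.comp γ) with hNdef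
  -- `d.symm` is continuous: `d` is real-linear by continuity, and linear maps in finite
  -- dimension are continuous.
  have hdsc : Continuous ⇑d.symm := by
    let le := LinearEquiv.ofBijective (d.toAddMonoidHom.toRealLinearMap hd).toLinearMap
      ⟨d.injective, d.surjective⟩
    have hfun : ⇑le.symm = ⇑d.symm := by
      funext y
      apply d.injective
      have h1 : d (le.symm y) = le (le.symm y) := rfl
      rw [h1, le.apply_symm_apply, d.apply_symm_apply]
    rw [← hfun]
    exact le.symm.toLinearMap.continuous_of_finiteDimensional
  have hNc : Continuous ⇑N := hβ.comp (hdsc.comp hγ)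
  have hkey : ∀ (ψ : L₁ →+ L₁), Continuous ⇑ψ → ∀ x, N (ψ (N x)) = 0 := by
    intro ψ hψ x
    have h0 := key_zero U hUc hUo β hβ γ hγ ψ hψ (d.symm (γ x))
    show β (d.symm (γ (ψ (β (d.symm (γ x)))))) = 0
    rw [h0]; simp
  constructor
  · intro h
    have hkey' : ∀ (ψ : L₁ →+ L₁), Continuous ⇑ψ → ∀ x, (-N) (ψ ((-N) x)) = 0 := by
      intro ψ hψ x
      simp only [AddMonoidHom.neg_apply, map_neg, neg_neg]
      exact hkey ψ hψ x
    have h' : IsTopAut ⇑(α - N) := by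
      rw [show ⇑(α - N) = (fun x : L₁ => α x - β (d.symm (γ x))) from rfl]; exact h
    have h2 := aux_pert (α - N) (-N) hNc.neg hkey' h'
    have heq : (fun x : L₁ => (α - N) x - (-N) x) = ⇑α := by
      funext x; simp
    rwa [heq] at h2
  · intro h
    exact aux_pert α N hNc hkey h
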